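/- Let (S_+, S_ω) be a finite ω-semigroup and (s_i)_{i≥1} a sequence in S_+. Then there exist an element s ∈ S_+, an idempotent f ∈ S_+, and indices i_1 < i_2 < ⋯ such that s_1⋯s_{i_1} = s, s_{i_{j−1}+1}⋯s_{i_j} = f for all j > 1, and s·f = s; consequently the infinite product s_1 s_2 s_3 ⋯ in S_ω equals s·f^ω. -/

import Mathlib

/-- `seg f i n` : the (nonempty) finite product `f i * f (i+1) * ⋯ * f (i+n)`. -/
def seg {S : Type*} [Semigroup S] (f : ℕ → S) (i : ℕ) : ℕ → S
  | 0 => f i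
  | n + 1 => f i * seg f (i + 1) n

/-- An ω-semigroup structure on a semigroup `Sp` and a set `Sw`: a mixed product
`Sp × Sw → Sw` and an infinite product `(Sp)^ω → Sw`, satisfying all forms of
associativity. -/
structure OmegaSemigroup (Sp : Type*) [Semigroup Sp] (Sw : Type*) where
  mixed : Sp → Sw → Sw
  iprod : (ℕ → Sp) → Sw
  mixed_assoc : ∀ (s t : Sp) (x : Sw), mixed (s * t) x = mixed s (mixed t x)
  iprod_cons : ∀ f : ℕ → Sp, iprod f = mixed (f 0) (iprod fun n => f (n + 1))
  iprod_assoc : ∀ (f : ℕ → Sp) (φ : ℕ → ℕ), StrictMono φ → φ 0 = 0 →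
    iprod f = iprod fun n => seg f (φ n) (φ (n + 1) - φ n - 1)

/-- Multiplicativity of `seg`. -/
lemma seg_mul {S : Type*} [Semigroup S] (f : ℕ → S) (i m n : ℕ) :
    seg f i m * seg f (i + m + 1) n = seg f i (m + n + 1) := by
  induction m generalizing i with
  | zero => simp [seg]
  | succ m ih =>
    have e1 : i + (m + 1) + 1 = (i + 1) + m + 1 := by omega
    have e2 : m + 1 + n + 1 = (m + n + 1) + 1 := by omega
    rw [e1, e2]
    show (f i * seg f (i + 1) m) * seg f ((i + 1) + m + 1) n = f i * seg f (i + 1) (m + n + 1)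
    rw [mul_assoc, ih]

/-- Pigeonhole: a finitely-colored infinite set of naturals has an infinite fiber. -/
lemma exists_infinite_fiber_on {α : Type*} [Finite α] (g : ℕ → α) (S : Set ℕ)
    (hS : S.Infinite) : ∃ c, {m | m ∈ S ∧ g m = c}.Infinite := by
  by_contra h
  push_neg at h
  have hsub : S ⊆ ⋃ c, {m | m ∈ S ∧ g m = c} := fun m hm => Set.mem_iUnion.2 ⟨g m, hm, rfl⟩
  exact hS ((Set.finite_iUnion fun c => h c).subset hsub)

/-- One step of the Ramsey construction. -/
lemma ramsey_step {α : Type*} [Finite α] (C : ℕ → ℕ → α) :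
    ∀ S : Set ℕ, S.Infinite → ∃ a, a ∈ S ∧ ∃ c T, T ⊆ S ∧ T.Infinite ∧
      ∀ m ∈ T, a < m ∧ C a m = c := by
  intro S hS
  obtain ⟨a, ha⟩ := hS.nonempty
  have hS' : (S \ Set.Iic a).Infinite := hS.diff (Set.finite_Iic a)
  obtain ⟨c, hc⟩ := exists_infinite_fiber_on (C a) _ hS'
  refine ⟨a, ha, c, {m | m ∈ S \ Set.Iic a ∧ C a m = c}, fun m hm => hm.1.1, hc, ?_⟩
  rintro m ⟨⟨-, hm2⟩, hm3⟩
  exact ⟨by simpa using hm2, hm3⟩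

/-- Infinite Ramsey theorem for pairs (in the form needed here). -/
lemma ramsey_pairs {α : Type*} [Finite α] (C : ℕ → ℕ → α) :
    ∃ (f : α) (φ : ℕ → ℕ), StrictMono φ ∧ ∀ m n, m < n → C (φ m) (φ n) = f := by
  choose A hA c T hTsub hTinf hT using ramsey_step C
  -- iterate
  let SS : ℕ → {S : Set ℕ // S.Infinite} := fun n =>
    Nat.rec ⟨Set.univ, Set.infinite_univ⟩ (fun _ p => ⟨T p.1 p.2, hTinf p.1 p.2⟩) n
  let aa : ℕ → ℕ := fun n => A (SS n).1 (SS n).2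
  let cc : ℕ → α := fun n => c (SS n).1 (SS n).2
  have hmem : ∀ n, aa n ∈ (SS n).1 := fun n => hA _ _
  have hsucc : ∀ n, (SS (n + 1)).1 ⊆ (SS n).1 := fun n => hTsub _ _
  have hstep : ∀ n, ∀ m ∈ (SS (n + 1)).1, aa n < m ∧ C (aa n) m = cc n := fun n => hT _ _
  have hanti : ∀ i j, i ≤ j → (SS j).1 ⊆ (SS i).1 := by
    intro i j hij
    induction j with
    | zero => simp_all
    | succ j ih =>
      rcases Nat.lt_or_ge i (j + 1) with h | h
      · exact fun m hm => ih (by omega) (hsucc j hm)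
      · have : i = j + 1 := by omega
        subst this; exact fun m hm => hm
  have key : ∀ i j, i < j → aa i < aa j ∧ C (aa i) (aa j) = cc i := by
    intro i j hij
    exact hstep i (aa j) (hanti (i + 1) j hij (hmem j))
  -- pigeonhole on colors
  obtain ⟨f, hf⟩ := exists_infinite_fiber_on cc Set.univ Set.infinite_univ
  have hf' : {n | cc n = f}.Infinite := by
    refine hf.mono ?_
    rintro n ⟨-, h⟩; exact h
  refine ⟨f, fun n => aa (Nat.nth (fun n => cc n = f) n), ?_, ?_⟩
  · intro m n hmn
    exact (key _ _ (Nat.nth_strictMono hf' hmn)).1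
  · intro m n hmn
    rw [(key _ _ (Nat.nth_strictMono hf' hmn)).2]
    exact Nat.nth_mem_of_infinite hf' m

/-- Ramsey-type factorization: for every sequence `(sq i)` in the finite semigroup
part `Sp` of a finite ω-semigroup, there are `s ∈ Sp`, an idempotent `f ∈ Sp` and
indices `i₁ < i₂ < ⋯` (given by a strictly monotone `φ`) such that
`sq 0 ⋯ sq i₁ = s`, each block product `sq (i_j + 1) ⋯ sq i_{j+1}` equals `f`,
`s·f = s`, and consequently the infinite product of `(sq i)` equals `s·f^ω`. -/
theorem ramsey_factorization {Sp Sw : Type*} [Semigroup Sp] [Fintype Sp] [Fintype Sw]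
    (W : OmegaSemigroup Sp Sw) (sq : ℕ → Sp) :
    ∃ (s f : Sp) (φ : ℕ → ℕ), StrictMono φ ∧
      seg sq 0 (φ 0) = s ∧
      (∀ j : ℕ, seg sq (φ j + 1) (φ (j + 1) - φ j - 1) = f) ∧
      f * f = f ∧ s * f = s ∧
      W.iprod sq = W.mixed s (W.iprod fun _ => f) := by
  -- the coloring: product of the block (i, j]
  set C : ℕ → ℕ → Sp := fun i j => seg sq (i + 1) (j - i - 1) with hC
  have Cmul : ∀ i j k, i < j → j < k → C i j * C j k = C i k := by
    intro i j k hij hjk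
    have h1 : (i + 1) + (j - i - 1) + 1 = j + 1 := by omega
    have h2 : (j - i - 1) + (k - j - 1) + 1 = k - i - 1 := by omega
    have := seg_mul sq (i + 1) (j - i - 1) (k - j - 1)
    rw [h1, h2] at this
    simpa [hC] using this
  have Cpre : ∀ i j, i < j → seg sq 0 i * C i j = seg sq 0 j := by
    intro i j hij
    have h2 : i + (j - i - 1) + 1 = j := by omega
    have := seg_mul sq 0 i (j - i - 1)
    rw [h2] at this
    simpa [hC] using this
  obtain ⟨f, ψ, hψ, hmono⟩ := ramsey_pairs C
  -- pigeonhole on prefixes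
  obtain ⟨s, hs⟩ := exists_infinite_fiber_on (fun n => seg sq 0 (ψ n)) Set.univ Set.infinite_univ
  have hs' : {n | seg sq 0 (ψ n) = s}.Infinite := by
    refine hs.mono ?_; rintro n ⟨-, h⟩; exact h
  set p : ℕ → Prop := fun n => seg sq 0 (ψ n) = s with hp
  set φ : ℕ → ℕ := fun n => ψ (Nat.nth p n) with hφ
  have hφmono : StrictMono φ := fun m n h => hψ (Nat.nth_strictMono hs' h)
  have hpre : ∀ n, seg sq 0 (φ n) = s := fun n => Nat.nth_mem_of_infinite hs' n
  have hblock : ∀ j : ℕ, seg sq (φ j + 1) (φ (j + 1) - φ j - 1) = f := by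
    intro j
    exact hmono _ _ (Nat.nth_strictMono hs' (Nat.lt_succ_self j))
  have hidem : f * f = f := by
    have h01 : φ 0 < φ 1 := hφmono Nat.zero_lt_one
    have h12 : φ 1 < φ 2 := hφmono Nat.one_lt_two
    have e01 : C (φ 0) (φ 1) = f := hmono _ _ (Nat.nth_strictMono hs' Nat.zero_lt_one)
    have e12 : C (φ 1) (φ 2) = f := hmono _ _ (Nat.nth_strictMono hs' Nat.one_lt_two)
    have e02 : C (φ 0) (φ 2) = f := hmono _ _ (Nat.nth_strictMono hs' Nat.zero_lt_two)
    calc f * f = C (φ 0) (φ 1) * C (φ 1) (φ 2) := by rw [e01, e12]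
      _ = C (φ 0) (φ 2) := Cmul _ _ _ h01 h12
      _ = f := e02
  have hsf : s * f = s := by
    have h01 : φ 0 < φ 1 := hφmono Nat.zero_lt_one
    have e01 : C (φ 0) (φ 1) = f := hmono _ _ (Nat.nth_strictMono hs' Nat.zero_lt_one)
    calc s * f = seg sq 0 (φ 0) * C (φ 0) (φ 1) := by rw [hpre 0, e01]
      _ = seg sq 0 (φ 1) := Cpre _ _ h01
      _ = s := hpre 1
  refine ⟨s, f, φ, hφmono, hpre 0, hblock, hidem, hsf, ?_⟩
  -- regroup the infinite product
  set χ : ℕ → ℕ := fun n => Nat.rec 0 (fun m _ => φ m + 1) n with hχ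
  have hχ0 : χ 0 = 0 := rfl
  have hχs : ∀ n, χ (n + 1) = φ n + 1 := fun n => rfl
  have hχmono : StrictMono χ := by
    refine strictMono_nat_of_lt_succ fun n => ?_
    cases n with
    | zero => exact Nat.succ_pos (φ 0)
    | succ m => exact Nat.succ_lt_succ (hφmono (Nat.lt_succ_self m))
  rw [W.iprod_assoc sq χ hχmono hχ0, W.iprod_cons]
  have e0 : seg sq (χ 0) (χ (0 + 1) - χ 0 - 1) = s := by
    show seg sq 0 (φ 0 + 1 - 0 - 1) = s
    have h : φ 0 + 1 - 0 - 1 = φ 0 := by omega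
    rw [h]; exact hpre 0
  have eS : (fun n => seg sq (χ (n + 1)) (χ (n + 1 + 1) - χ (n + 1) - 1)) = fun _ => f := by
    funext n
    show seg sq (φ n + 1) (φ (n + 1) + 1 - (φ n + 1) - 1) = f
    have h : φ (n + 1) + 1 - (φ n + 1) - 1 = φ (n + 1) - φ n - 1 := by omega
    rw [h]; exact hblock n
  rw [e0, eS]
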